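/- Let x, y > 0 with x/y < 1, and define F : ℝ → ℝ by F(s) = 2y ∫₀^∞ K₀(2yt · sinh(st)/(st)) e^{−2xt} dt for s ≠ 0 and F(0) = ∫₀^∞ K₀(t) e^{−(x/y)t} dt. Then F is twice continuously differentiable with F'(0) = 0 and F''(0) = −(1/(12 y²)) ∫₀^∞ t³ K₁(t) e^{−(x/y)t} dt. -/

import Mathlib

open Real Set MeasureTheory Filter Metric Topology

/-- The modified Bessel function of the second kind,
`K_ν(x) = ∫₀^∞ exp(−x cosh t) cosh(ν t) dt`. -/
noncomputable def besselK (ν x : ℝ) : ℝ :=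
  ∫ t in Set.Ioi (0:ℝ), Real.exp (-x * Real.cosh t) * Real.cosh (ν * t)

namespace BK

lemma sq_div_four_le_exp {u : ℝ} (hu : 0 ≤ u) : u^2/4 ≤ exp u := by
  have h1 := add_one_le_exp (u/2)
  have h2 : (u/2)^2 ≤ (exp (u/2))^2 := by nlinarith [exp_pos (u/2)]
  calc u^2/4 = (u/2)^2 := by ring
  _ ≤ (exp (u/2))^2 := h2
  _ = exp u := by rw [sq, ← exp_add]; ring_nf

lemma linear_sub_exp_le {b k u : ℝ} (hk : 0 < k) (hu : 0 ≤ u) : b*u - k*exp u ≤ b^2/k := by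
  have h1 : k*(u^2/4) ≤ k*exp u := by nlinarith [sq_div_four_le_exp hu]
  have key : b*u - k*(u^2/4) ≤ b^2/k := by
    rw [le_div_iff₀ hk]
    nlinarith [sq_nonneg (b - k*u/2)]
  linarith

lemma cosh_le_exp {u : ℝ} (hu : 0 ≤ u) : cosh u ≤ exp u := by
  rw [cosh_eq]
  have : exp (-u) ≤ exp u := exp_le_exp.2 (by linarith)
  linarith

lemma half_exp_le_cosh (u : ℝ) : exp u / 2 ≤ cosh u := by
  rw [cosh_eq]
  have := (exp_pos (-u)).le
  linarith

/-- The family of integrals `J n z = ∫_0^∞ cosh^n u · e^{-z cosh u} du`. -/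
noncomputable def J (n : ℕ) (z : ℝ) : ℝ :=
  ∫ u in Ioi (0:ℝ), cosh u ^ n * exp (-(z * cosh u))

lemma J_integrand_le {n : ℕ} {z u : ℝ} (hz : 0 < z) (hu : 0 ≤ u) :
    cosh u ^ n * exp (-(z * cosh u)) ≤ exp (((n:ℝ)+1)^2/(z/2)) * exp (-u) := by
  have hc1 : cosh u ≤ exp u := cosh_le_exp hu
  have hpow : cosh u ^ n ≤ exp ((n:ℝ)*u) := by
    calc cosh u ^ n ≤ (exp u)^n := pow_le_pow_left₀ (cosh_pos u).le hc1 n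
    _ = exp ((n:ℝ)*u) := by rw [← exp_nat_mul]
  have hexp : exp (-(z * cosh u)) ≤ exp (-(z/2 * exp u)) := by
    apply exp_le_exp.2
    have := half_exp_le_cosh u
    nlinarith
  have h0 : (0:ℝ) ≤ cosh u ^ n := pow_nonneg (cosh_pos u).le n
  calc cosh u ^ n * exp (-(z * cosh u)) ≤ exp ((n:ℝ)*u) * exp (-(z/2 * exp u)) := by
        apply mul_le_mul hpow hexp (exp_pos _).le (exp_pos _).le
  _ = exp (((n:ℝ)+1)*u - z/2 * exp u) * exp (-u) := by rw [← exp_add, ← exp_add]; ring_nf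
  _ ≤ exp (((n:ℝ)+1)^2/(z/2)) * exp (-u) := by
      have := linear_sub_exp_le (b := (n:ℝ)+1) (k := z/2) (u := u) (by linarith) hu
      exact mul_le_mul_of_nonneg_right (exp_le_exp.2 this) (exp_pos _).le

lemma J_integrableOn (n : ℕ) {z : ℝ} (hz : 0 < z) :
    IntegrableOn (fun u => cosh u ^ n * exp (-(z * cosh u))) (Ioi (0:ℝ)) := by
  have hcont : Continuous fun u : ℝ => cosh u ^ n * exp (-(z * cosh u)) :=
    (Real.continuous_cosh.pow n).mul (((continuous_const.mul Real.continuous_cosh).neg).rexp)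
  refine Integrable.mono ((exp_neg_integrableOn_Ioi 0 one_pos).const_mul
    (exp (((n:ℝ)+1)^2/(z/2)))) hcont.aestronglyMeasurable.restrict ?_
  filter_upwards [ae_restrict_mem measurableSet_Ioi] with u hu
  have h0 : (0:ℝ) ≤ cosh u ^ n * exp (-(z * cosh u)) :=
    mul_nonneg (pow_nonneg (cosh_pos u).le n) (exp_pos _).le
  rw [Real.norm_eq_abs, abs_of_nonneg h0, Real.norm_eq_abs]
  have := J_integrand_le (n := n) hz (le_of_lt (mem_Ioi.1 hu))
  rw [abs_of_nonneg (by positivity)]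
  simpa using this


lemma J_cont (n : ℕ) (z : ℝ) : Continuous fun u : ℝ => cosh u ^ n * exp (-(z * cosh u)) :=
  (Real.continuous_cosh.pow n).mul (((continuous_const.mul Real.continuous_cosh).neg).rexp)

lemma hasDerivAt_J (n : ℕ) {z₀ : ℝ} (hz : 0 < z₀) :
    HasDerivAt (J n) (-(J (n+1) z₀)) z₀ := by
  have key := hasDerivAt_integral_of_dominated_loc_of_deriv_le
    (F := fun z u => cosh u ^ n * exp (-(z * cosh u)))
    (F' := fun z u => -(cosh u ^ (n+1) * exp (-(z * cosh u))))
    (x₀ := z₀) (s := ball z₀ (z₀/2))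
    (bound := fun u => cosh u ^ (n+1) * exp (-(z₀/2 * cosh u)))
    (μ := volume.restrict (Ioi (0:ℝ)))
    (ball_mem_nhds _ (by positivity))
    (Eventually.of_forall fun z => (J_cont n z).aestronglyMeasurable.restrict)
    (J_integrableOn n hz)
    ((J_cont (n+1) z₀).neg.aestronglyMeasurable.restrict)
    ?_ (J_integrableOn (n+1) (by positivity)) ?_
  · have : (∫ u in Ioi (0:ℝ), -(cosh u ^ (n+1) * exp (-(z₀ * cosh u)))) = -(J (n+1) z₀) := by
      rw [integral_neg]; rfl
    rw [← this]
    exact key.2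
  · filter_upwards [ae_restrict_mem measurableSet_Ioi] with u hu
    intro z hzball
    have hz2 : z₀/2 ≤ z := by
      have := abs_lt.1 (mem_ball_iff_norm.1 hzball)
      linarith [this.1]
    have h1 : (1:ℝ) ≤ cosh u := one_le_cosh u
    rw [Real.norm_eq_abs, abs_neg, abs_of_nonneg (by positivity)]
    have : exp (-(z * cosh u)) ≤ exp (-(z₀/2 * cosh u)) := by
      apply exp_le_exp.2; nlinarith
    exact mul_le_mul_of_nonneg_left this (by positivity)
  · filter_upwards [ae_restrict_mem measurableSet_Ioi] with u hu
    intro z hzball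
    have hd : HasDerivAt (fun z : ℝ => exp (-(z * cosh u))) (-cosh u * exp (-(z * cosh u))) z := by
      have h1 : HasDerivAt (fun z : ℝ => -(z * cosh u)) (-cosh u) z := by
        exact (((hasDerivAt_id z).mul_const (cosh u)).neg).congr_deriv (by simp)
      simpa [mul_comm] using h1.exp
    have := hd.const_mul (cosh u ^ n)
    refine this.congr_deriv ?_
    ring

lemma J_continuousOn (n : ℕ) : ContinuousOn (J n) (Ioi (0:ℝ)) := fun z hz =>
  (hasDerivAt_J n (mem_Ioi.1 hz)).continuousAt.continuousWithinAt

lemma J_nonneg (n : ℕ) (z : ℝ) : 0 ≤ J n z := by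
  apply integral_nonneg
  intro u
  positivity


lemma integrableOn_of_exp_bound {f : ℝ → ℝ} (hf : Continuous f) {C : ℝ}
    (h : ∀ u, 0 ≤ u → ‖f u‖ ≤ C * exp (-u)) : IntegrableOn f (Ioi (0:ℝ)) := by
  have hint : IntegrableOn (fun u => C * exp (-u)) (Ioi (0:ℝ)) := by
    have := (exp_neg_integrableOn_Ioi 0 one_pos).const_mul C
    exact IntegrableOn.congr_fun this (fun u _ => by simp) measurableSet_Ioi
  refine Integrable.mono' hint hf.aestronglyMeasurable.restrict ?_
  filter_upwards [ae_restrict_mem measurableSet_Ioi] with u hu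
  exact h u (le_of_lt (mem_Ioi.1 hu))

lemma tendsto_sinh_atTop : Tendsto sinh atTop atTop := by
  have heq : sinh = fun u : ℝ => (exp u - exp (-u)) / 2 := funext fun u => sinh_eq u
  rw [heq]
  apply Tendsto.atTop_div_const two_pos
  have h1 : Tendsto (fun u : ℝ => -exp (-u)) atTop (𝓝 (-0)) :=
    tendsto_exp_neg_atTop_nhds_zero.neg
  simpa [sub_eq_add_neg] using tendsto_exp_atTop.atTop_add h1

lemma sinh_bound_int {b : ℝ} (hb : 0 ≤ b) {a : ℝ} (ha : 0 < a) (u : ℝ) (hu : 0 ≤ u) :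
    exp (b*u) * exp (-(a * sinh u)) ≤ (exp (a/2) * exp ((b+1)^2/(a/2))) * exp (-u) := by
  have hs : (exp u - 1)/2 ≤ sinh u := by
    rw [sinh_eq]
    have : exp (-u) ≤ 1 := exp_le_one_iff.2 (by linarith)
    linarith
  have h1 : exp (-(a * sinh u)) ≤ exp (a/2 + -(a/2 * exp u)) := by
    apply exp_le_exp.2; nlinarith
  calc exp (b*u) * exp (-(a * sinh u)) ≤ exp (b*u) * exp (a/2 + -(a/2 * exp u)) :=
        mul_le_mul_of_nonneg_left h1 (exp_pos _).le
  _ = exp (a/2) * (exp ((b+1)*u - a/2 * exp u) * exp (-u)) := by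
        rw [← exp_add, ← exp_add, ← exp_add]; congr 1; ring
  _ ≤ (exp (a/2) * exp ((b+1)^2/(a/2))) * exp (-u) := by
        have h2 := exp_le_exp.2 (linear_sub_exp_le (b := b+1) (k := a/2) (by linarith) hu)
        calc exp (a/2) * (exp ((b+1)*u - a/2 * exp u) * exp (-u))
            ≤ exp (a/2) * (exp ((b+1)^2/(a/2)) * exp (-u)) := by
              apply mul_le_mul_of_nonneg_left _ (exp_pos _).le
              exact mul_le_mul_of_nonneg_right h2 (exp_pos _).le
        _ = (exp (a/2) * exp ((b+1)^2/(a/2))) * exp (-u) := by ring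

lemma integrable_cosh_exp_sinh {a : ℝ} (ha : 0 < a) :
    IntegrableOn (fun u => cosh u * exp (-(a * sinh u))) (Ioi (0:ℝ)) := by
  apply integrableOn_of_exp_bound
    ((Real.continuous_cosh).mul (((continuous_const.mul Real.continuous_sinh).neg).rexp))
    (C := exp (a/2) * exp ((1+1)^2/(a/2)))
  intro u hu
  show ‖cosh u * exp (-(a * sinh u))‖ ≤ _
  rw [Real.norm_eq_abs, abs_of_nonneg (mul_nonneg (cosh_pos u).le (exp_pos _).le)]
  calc cosh u * exp (-(a * sinh u)) ≤ exp (1*u) * exp (-(a * sinh u)) := by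
        apply mul_le_mul_of_nonneg_right _ (exp_pos _).le
        simpa using cosh_le_exp hu
  _ ≤ (exp (a/2) * exp ((1+1)^2/(a/2))) * exp (-u) := sinh_bound_int one_pos.le ha u hu

lemma integrable_one_add_sinh {a : ℝ} (ha : 0 < a) :
    IntegrableOn (fun u => (1 + sinh u) * cosh u * exp (-(a * sinh u))) (Ioi (0:ℝ)) := by
  apply integrableOn_of_exp_bound
    (((continuous_const.add Real.continuous_sinh).mul Real.continuous_cosh).mul
      (((continuous_const.mul Real.continuous_sinh).neg).rexp))
    (C := 2 * (exp (a/2) * exp ((2+1)^2/(a/2))))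
  intro u hu
  have hsnn : 0 ≤ sinh u := sinh_nonneg_iff.2 hu
  show ‖(1 + sinh u) * cosh u * exp (-(a * sinh u))‖ ≤ _
  rw [Real.norm_eq_abs, abs_of_nonneg (mul_nonneg (mul_nonneg (by linarith) (cosh_pos u).le) (exp_pos _).le)]
  have hsinh : sinh u ≤ exp u := by
    rw [sinh_eq]; have := (exp_pos (-u)).le
    have h1 : (0:ℝ) ≤ exp u := (exp_pos u).le
    linarith
  have he : (1:ℝ) ≤ exp u := one_le_exp (by linarith)
  have hc := cosh_le_exp hu
  have hcnn := (cosh_pos u).le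
  have h1 : (1 + sinh u) * cosh u ≤ 2 * exp (2*u) := by
    have h2 : exp u * exp u = exp (2*u) := by rw [← exp_add]; congr 1; ring
    nlinarith
  calc (1 + sinh u) * cosh u * exp (-(a * sinh u)) ≤ 2 * (exp (2*u) * exp (-(a * sinh u))) := by
        have := mul_le_mul_of_nonneg_right h1 (exp_pos (-(a * sinh u))).le
        linarith
  _ ≤ 2 * ((exp (a/2) * exp ((2+1)^2/(a/2))) * exp (-u)) := by
        have := sinh_bound_int (b := 2) (by norm_num) ha u hu
        linarith
  _ = (2 * (exp (a/2) * exp ((2+1)^2/(a/2)))) * exp (-u) := by ring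

lemma tendsto_neg_mul_sinh {a : ℝ} (ha : 0 < a) :
    Tendsto (fun u : ℝ => -(a * sinh u)) atTop atBot := by
  have h := Tendsto.const_mul_atTop ha tendsto_sinh_atTop
  exact tendsto_neg_atTop_atBot.comp h

lemma integral_cosh_exp_sinh {a : ℝ} (ha : 0 < a) :
    ∫ u in Ioi (0:ℝ), cosh u * exp (-(a * sinh u)) = 1/a := by
  have key := integral_Ioi_of_hasDerivAt_of_tendsto'
    (f := fun u => -(1/a) * exp (-(a * sinh u)))
    (f' := fun u => cosh u * exp (-(a * sinh u))) (a := 0) (m := 0)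
    ?_ (integrable_cosh_exp_sinh ha) ?_
  · rw [key]; simp [sinh_zero]
  · intro u _
    have h1 : HasDerivAt (fun u : ℝ => -(a * sinh u)) (-(a * cosh u)) u := by
      exact ((Real.hasDerivAt_sinh u).const_mul a).neg
    have h2 := (h1.exp).const_mul (-(1/a))
    refine h2.congr_deriv ?_
    field_simp
  · have h2 : Tendsto (fun u : ℝ => exp (-(a * sinh u))) atTop (𝓝 0) :=
      tendsto_exp_atBot.comp (tendsto_neg_mul_sinh ha)
    have := h2.const_mul (-(1/a))
    simpa using this

lemma integral_one_add_sinh {a : ℝ} (ha : 0 < a) :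
    ∫ u in Ioi (0:ℝ), (1 + sinh u) * cosh u * exp (-(a * sinh u)) = 1/a + 1/a^2 := by
  have key := integral_Ioi_of_hasDerivAt_of_tendsto'
    (f := fun u => -((1 + sinh u)/a + 1/a^2) * exp (-(a * sinh u)))
    (f' := fun u => (1 + sinh u) * cosh u * exp (-(a * sinh u))) (a := 0) (m := 0)
    ?_ (integrable_one_add_sinh ha) ?_
  · rw [key]
    simp only [sinh_zero, zero_mul, neg_zero, Real.exp_zero, mul_one, zero_sub, neg_neg, add_zero]
    ring_nf
    simp [Real.exp_zero]
  · intro u _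
    have hsd := Real.hasDerivAt_sinh u
    have h1 : HasDerivAt (fun u : ℝ => -((1 + sinh u)/a + 1/a^2)) (-(cosh u/a)) u :=
      (((hsd.const_add 1).div_const a).add_const (1/a^2)).neg
    have h2 : HasDerivAt (fun u : ℝ => exp (-(a * sinh u)))
        (exp (-(a * sinh u)) * (-(a * cosh u))) u := by
      have h3 : HasDerivAt (fun u : ℝ => -(a * sinh u)) (-(a * cosh u)) u := by
        exact (hsd.const_mul a).neg
      simpa [mul_comm] using h3.exp
    have := h1.mul h2
    refine this.congr_deriv ?_
    field_simp
    ring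
  · have hcomp : Tendsto (fun w : ℝ => -((1 + w)/a + 1/a^2) * exp (-(a * w))) atTop (𝓝 0) := by
      have hw : Tendsto (fun w : ℝ => a * w) atTop atTop :=
        Tendsto.const_mul_atTop ha tendsto_id
      have hp := (tendsto_pow_mul_exp_neg_atTop_nhds_zero 1).comp hw
      have hp0 := (tendsto_pow_mul_exp_neg_atTop_nhds_zero 0).comp hw
      have heq : (fun w : ℝ => -((1 + w)/a + 1/a^2) * exp (-(a * w)))
          = fun w => (-(1/a^2) - 1/a) * ((fun x => x^0 * exp (-x)) (a*w))
            + (-(1/a) * (1/a)) * ((fun x => x^1 * exp (-x)) (a*w)) := by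
        funext w
        have ha' : a ≠ 0 := ne_of_gt ha
        simp only [pow_zero, pow_one, one_mul]
        field_simp
        ring
      rw [heq]
      have := ((hp0.const_mul (-(1/a^2) - 1/a)).add (hp.const_mul (-(1/a) * (1/a))))
      simpa [Function.comp] using this
    have := hcomp.comp tendsto_sinh_atTop
    simpa [Function.comp_def] using this


lemma two_cosh_ge {u : ℝ} (hu : 0 ≤ u) : 1 + sinh u ≤ 2 * cosh u := by
  rw [sinh_eq, cosh_eq]
  have h1 : (1:ℝ) ≤ exp u := one_le_exp hu
  have h2 : 0 < exp (-u) := exp_pos _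
  have h3 : exp u * exp (-u) = 1 := by rw [← exp_add]; simp
  nlinarith [sq_nonneg (exp u - 1)]

lemma cosh_le_one_add_sinh {u : ℝ} (hu : 0 ≤ u) : cosh u ≤ 1 + sinh u := by
  rw [sinh_eq, cosh_eq]
  have : exp (-u) ≤ 1 := exp_le_one_iff.2 (by linarith)
  linarith

lemma J1_le {z : ℝ} (hz : 0 < z) : J 1 z ≤ 2/z * exp (-(z/2)) := by
  have hmono : ∀ u ∈ Ioi (0:ℝ), cosh u ^ 1 * exp (-(z * cosh u))
      ≤ exp (-(z/2)) * (cosh u * exp (-(z/2 * sinh u))) := by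
    intro u hu
    have hu0 : (0:ℝ) ≤ u := (mem_Ioi.1 hu).le
    have h1 := two_cosh_ge hu0
    have h2 : exp (-(z * cosh u)) ≤ exp (-(z/2) + -(z/2 * sinh u)) := by
      apply exp_le_exp.2; nlinarith
    rw [pow_one]
    calc cosh u * exp (-(z * cosh u)) ≤ cosh u * exp (-(z/2) + -(z/2 * sinh u)) :=
          mul_le_mul_of_nonneg_left h2 (cosh_pos u).le
    _ = exp (-(z/2)) * (cosh u * exp (-(z/2 * sinh u))) := by rw [exp_add]; ring
  have hint : IntegrableOn (fun u => exp (-(z/2)) * (cosh u * exp (-(z/2 * sinh u)))) (Ioi (0:ℝ)) :=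
    (integrable_cosh_exp_sinh (by positivity)).const_mul _
  have := setIntegral_mono_on (J_integrableOn 1 hz) hint measurableSet_Ioi hmono
  calc J 1 z ≤ ∫ u in Ioi (0:ℝ), exp (-(z/2)) * (cosh u * exp (-(z/2 * sinh u))) := this
  _ = exp (-(z/2)) * ∫ u in Ioi (0:ℝ), cosh u * exp (-(z/2 * sinh u)) := by
      rw [integral_const_mul]
  _ = exp (-(z/2)) * (1/(z/2)) := by rw [integral_cosh_exp_sinh (by positivity)]
  _ = 2/z * exp (-(z/2)) := by ring

lemma J2_le {z : ℝ} (hz : 0 < z) : J 2 z ≤ (2/z + 4/z^2) * exp (-(z/2)) := by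
  have hmono : ∀ u ∈ Ioi (0:ℝ), cosh u ^ 2 * exp (-(z * cosh u))
      ≤ exp (-(z/2)) * ((1 + sinh u) * cosh u * exp (-(z/2 * sinh u))) := by
    intro u hu
    have hu0 : (0:ℝ) ≤ u := (mem_Ioi.1 hu).le
    have h1 := two_cosh_ge hu0
    have h0 := cosh_le_one_add_sinh hu0
    have hc := (cosh_pos u).le
    have h2 : exp (-(z * cosh u)) ≤ exp (-(z/2) + -(z/2 * sinh u)) := by
      apply exp_le_exp.2; nlinarith
    have h3 : cosh u ^ 2 ≤ (1 + sinh u) * cosh u := by nlinarith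
    calc cosh u ^ 2 * exp (-(z * cosh u)) ≤ ((1 + sinh u) * cosh u) * exp (-(z/2) + -(z/2 * sinh u)) := by
          apply mul_le_mul h3 h2 (exp_pos _).le (by nlinarith)
    _ = exp (-(z/2)) * ((1 + sinh u) * cosh u * exp (-(z/2 * sinh u))) := by
          rw [exp_add]; ring
  have hint : IntegrableOn
      (fun u => exp (-(z/2)) * ((1 + sinh u) * cosh u * exp (-(z/2 * sinh u)))) (Ioi (0:ℝ)) :=
    (integrable_one_add_sinh (by positivity)).const_mul _
  have := setIntegral_mono_on (J_integrableOn 2 hz) hint measurableSet_Ioi hmono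
  calc J 2 z ≤ _ := this
  _ = exp (-(z/2)) * ∫ u in Ioi (0:ℝ), (1 + sinh u) * cosh u * exp (-(z/2 * sinh u)) := by
      rw [integral_const_mul]
  _ = exp (-(z/2)) * (1/(z/2) + 1/(z/2)^2) := by rw [integral_one_add_sinh (by positivity)]
  _ = (2/z + 4/z^2) * exp (-(z/2)) := by field_simp; ring

lemma one_add_sq_half_le_cosh {u : ℝ} (hu : 0 ≤ u) : 1 + u^2/2 ≤ cosh u := by
  have h1 : cosh u = 1 + 2 * sinh (u/2)^2 := by
    have h2 : u = 2 * (u/2) := by ring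
    rw [h2, cosh_two_mul, Real.cosh_sq]
    ring
  have h3 : u/2 ≤ sinh (u/2) := by
    rcases eq_or_lt_of_le (by linarith : (0:ℝ) ≤ u/2) with h | h
    · rw [← h]; simp
    · exact (self_lt_sinh_iff.2 h).le
  have h4 : (u/2)^2 ≤ sinh (u/2)^2 := by nlinarith
  nlinarith

lemma J0_le {z : ℝ} (hz : 0 < z) : J 0 z ≤ Real.sqrt (π/(z/2)) / 2 * exp (-z) := by
  have hmono : ∀ u ∈ Ioi (0:ℝ), cosh u ^ 0 * exp (-(z * cosh u))
      ≤ exp (-z) * exp (-(z/2) * u^2) := by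
    intro u hu
    have hu0 : (0:ℝ) ≤ u := (mem_Ioi.1 hu).le
    have h1 := one_add_sq_half_le_cosh hu0
    rw [pow_zero, one_mul, ← exp_add]
    apply exp_le_exp.2
    nlinarith
  have hgauss : IntegrableOn (fun u : ℝ => exp (-(z/2) * u^2)) (Ioi (0:ℝ)) :=
    (integrable_exp_neg_mul_sq (by positivity : (0:ℝ) < z/2)).integrableOn
  have hint : IntegrableOn (fun u : ℝ => exp (-z) * exp (-(z/2) * u^2)) (Ioi (0:ℝ)) :=
    hgauss.const_mul _
  have hm := setIntegral_mono_on (J_integrableOn 0 hz) hint measurableSet_Ioi hmono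
  calc J 0 z ≤ _ := hm
  _ = exp (-z) * ∫ u in Ioi (0:ℝ), exp (-(z/2) * u^2) := by rw [integral_const_mul]
  _ = exp (-z) * (Real.sqrt (π/(z/2)) / 2) := by rw [integral_gaussian_Ioi]
  _ = Real.sqrt (π/(z/2)) / 2 * exp (-z) := by ring


lemma abs_sinh_le_cosh (x : ℝ) : |sinh x| ≤ cosh x := by
  rw [abs_sinh, ← cosh_abs x]
  rw [Real.sinh_eq, Real.cosh_eq]
  have := (exp_pos (-|x|)).le
  linarith

noncomputable def phi (v : ℝ) : ℝ := ∫ r in Ioc (0:ℝ) 1, cosh (v*r)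
noncomputable def phi1 (v : ℝ) : ℝ := ∫ r in Ioc (0:ℝ) 1, r * sinh (v*r)
noncomputable def phi2 (v : ℝ) : ℝ := ∫ r in Ioc (0:ℝ) 1, r^2 * cosh (v*r)

lemma phi_zero : phi 0 = 1 := by
  have : (fun r : ℝ => cosh (0*r)) = fun _ => (1:ℝ) := by funext r; simp
  rw [phi, this]
  simp

lemma phi1_zero : phi1 0 = 0 := by
  have : (fun r : ℝ => r * sinh (0*r)) = fun _ => (0:ℝ) := by funext r; simp
  rw [phi1, this]
  simp

lemma phi2_zero : phi2 0 = 1/3 := by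
  have h : (fun r : ℝ => r^2 * cosh (0*r)) = fun r => r^2 := by funext r; simp
  rw [phi2, h, ← intervalIntegral.integral_of_le zero_le_one]
  rw [integral_pow]
  norm_num

lemma phi_eq {v : ℝ} (hv : v ≠ 0) : phi v = sinh v / v := by
  rw [phi, ← intervalIntegral.integral_of_le zero_le_one]
  have hderiv : ∀ r ∈ uIcc (0:ℝ) 1, HasDerivAt (fun r => sinh (v*r) / v) (cosh (v*r)) r := by
    intro r _
    have h1 : HasDerivAt (fun r : ℝ => v*r) v r := by
      simpa using (hasDerivAt_id r).const_mul v
    have := (h1.sinh).div_const v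
    refine this.congr_deriv ?_
    field_simp
  have hint : IntervalIntegrable (fun r => cosh (v*r)) volume 0 1 :=
    ((Real.continuous_cosh.comp (continuous_const.mul continuous_id))).intervalIntegrable 0 1
  rw [intervalIntegral.integral_eq_sub_of_hasDerivAt hderiv hint]
  simp

/-- parametric differentiation over `Ioc 0 1` with a constant bound -/
lemma hasDerivAt_param {f f' : ℝ → ℝ → ℝ}
    (hint : ∀ v, IntegrableOn (fun r => f v r) (Ioc (0:ℝ) 1))
    (hmeas' : ∀ v, AEStronglyMeasurable (fun r => f' v r) (volume.restrict (Ioc (0:ℝ) 1)))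
    (v₀ : ℝ) {C : ℝ}
    (hbound : ∀ r ∈ Ioc (0:ℝ) 1, ∀ v ∈ ball v₀ 1, |f' v r| ≤ C)
    (hderiv : ∀ r ∈ Ioc (0:ℝ) 1, ∀ v ∈ ball v₀ 1, HasDerivAt (fun v => f v r) (f' v r) v) :
    HasDerivAt (fun v => ∫ r in Ioc (0:ℝ) 1, f v r) (∫ r in Ioc (0:ℝ) 1, f' v₀ r) v₀ := by
  have hC : IntegrableOn (fun _ : ℝ => C) (Ioc (0:ℝ) 1) := integrableOn_const (by
    simp [Real.volume_Ioc])
  have key := hasDerivAt_integral_of_dominated_loc_of_deriv_le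
    (F := fun v r => f v r) (F' := fun v r => f' v r) (x₀ := v₀) (s := ball v₀ 1)
    (bound := fun _ => C) (μ := volume.restrict (Ioc (0:ℝ) 1)) (ball_mem_nhds _ one_pos)
    (Eventually.of_forall fun v => (hint v).aestronglyMeasurable)
    (hint v₀) (hmeas' v₀) ?_ hC ?_
  · exact key.2
  · filter_upwards [ae_restrict_mem measurableSet_Ioc] with r hr
    intro v hv
    rw [Real.norm_eq_abs]
    exact hbound r hr v hv
  · filter_upwards [ae_restrict_mem measurableSet_Ioc] with r hr
    intro v hv
    exact hderiv r hr v hv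

lemma cont_vr (g : ℝ → ℝ) (hg : Continuous g) (c : ℝ → ℝ) (hc : Continuous c) :
    ∀ v : ℝ, IntegrableOn (fun r => c r * g (v*r)) (Ioc (0:ℝ) 1) :=
  fun v => (hc.mul (hg.comp (continuous_const.mul continuous_id))).integrableOn_Ioc

lemma sinh_abs_le {w M : ℝ} (h : |w| ≤ M) : |sinh w| ≤ cosh M := by
  calc |sinh w| ≤ cosh w := abs_sinh_le_cosh w
  _ = cosh |w| := (cosh_abs w).symm
  _ ≤ cosh M := by
      rw [Real.cosh_le_cosh]
      rw [abs_abs]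
      calc |w| ≤ M := h
      _ ≤ |M| := le_abs_self M

lemma cosh_abs_le {w M : ℝ} (h : |w| ≤ M) : cosh w ≤ cosh M := by
  rw [← cosh_abs w, Real.cosh_le_cosh, abs_abs]
  exact h.trans (le_abs_self M)

lemma hasDerivAt_phi (v₀ : ℝ) : HasDerivAt phi (phi1 v₀) v₀ := by
  apply hasDerivAt_param (f := fun v r => cosh (v*r)) (f' := fun v r => r * sinh (v*r))
    (C := cosh (|v₀| + 1))
  · intro v
    simpa using cont_vr cosh Real.continuous_cosh (fun _ => 1) continuous_const v
  · intro v
    exact (continuous_id.mul (Real.continuous_sinh.comp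
      (continuous_const.mul continuous_id))).aestronglyMeasurable.restrict
  · intro r hr v hv
    have hr1 : |r| ≤ 1 := by
      rw [abs_of_pos hr.1]; exact hr.2
    have hv1 : |v| ≤ |v₀| + 1 := by
      have hd := abs_lt.1 (mem_ball_iff_norm.1 hv)
      have h1 := neg_abs_le v₀
      have h2 := le_abs_self v₀
      exact abs_le.2 ⟨by linarith [hd.1], by linarith [hd.2]⟩
    have : |v*r| ≤ |v₀| + 1 := by
      rw [abs_mul]
      calc |v| * |r| ≤ (|v₀|+1) * 1 := by
            apply mul_le_mul hv1 hr1 (abs_nonneg r) (by positivity)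
      _ = |v₀| + 1 := by ring
    calc |r * sinh (v*r)| = |r| * |sinh (v*r)| := abs_mul _ _
    _ ≤ 1 * cosh (|v₀| + 1) := by
        apply mul_le_mul hr1 (sinh_abs_le this) (abs_nonneg _) zero_le_one
    _ = cosh (|v₀| + 1) := one_mul _
  · intro r _ v _
    have h1 : HasDerivAt (fun v : ℝ => v*r) r v := by
      simpa using (hasDerivAt_id v).mul_const r
    simpa [mul_comm] using h1.cosh

lemma hasDerivAt_phi1 (v₀ : ℝ) : HasDerivAt phi1 (phi2 v₀) v₀ := by
  apply hasDerivAt_param (f := fun v r => r * sinh (v*r)) (f' := fun v r => r^2 * cosh (v*r))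
    (C := cosh (|v₀| + 1))
  · intro v
    exact cont_vr sinh Real.continuous_sinh id continuous_id v
  · intro v
    exact ((continuous_pow 2).mul (Real.continuous_cosh.comp
      (continuous_const.mul continuous_id))).aestronglyMeasurable.restrict
  · intro r hr v hv
    have hr1 : |r| ≤ 1 := by rw [abs_of_pos hr.1]; exact hr.2
    have hv1 : |v| ≤ |v₀| + 1 := by
      have hd := abs_lt.1 (mem_ball_iff_norm.1 hv)
      have h1 := neg_abs_le v₀
      have h2 := le_abs_self v₀
      exact abs_le.2 ⟨by linarith [hd.1], by linarith [hd.2]⟩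
    have hvr : |v*r| ≤ |v₀| + 1 := by
      rw [abs_mul]
      calc |v| * |r| ≤ (|v₀|+1) * 1 := mul_le_mul hv1 hr1 (abs_nonneg r) (by positivity)
      _ = |v₀| + 1 := by ring
    calc |r^2 * cosh (v*r)| = |r|^2 * |cosh (v*r)| := by rw [abs_mul, abs_pow]
    _ ≤ 1 * cosh (|v₀| + 1) := by
        apply mul_le_mul _ _ (abs_nonneg _) zero_le_one
        · exact pow_le_one₀ (abs_nonneg r) hr1
        · rw [abs_of_pos (cosh_pos _)]
          exact cosh_abs_le hvr
    _ = cosh (|v₀| + 1) := one_mul _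
  · intro r _ v _
    have h1 : HasDerivAt (fun v : ℝ => v*r) r v := by
      simpa using (hasDerivAt_id v).mul_const r
    have := (h1.sinh).const_mul r
    refine this.congr_deriv ?_
    ring

noncomputable def phi3 (v : ℝ) : ℝ := ∫ r in Ioc (0:ℝ) 1, r^3 * sinh (v*r)

lemma hasDerivAt_phi2 (v₀ : ℝ) : HasDerivAt phi2 (phi3 v₀) v₀ := by
  apply hasDerivAt_param (f := fun v r => r^2 * cosh (v*r)) (f' := fun v r => r^3 * sinh (v*r))
    (C := cosh (|v₀| + 1))
  · intro v
    exact cont_vr cosh Real.continuous_cosh (fun r => r^2) (continuous_pow 2) v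
  · intro v
    exact ((continuous_pow 3).mul (Real.continuous_sinh.comp
      (continuous_const.mul continuous_id))).aestronglyMeasurable.restrict
  · intro r hr v hv
    have hr1 : |r| ≤ 1 := by rw [abs_of_pos hr.1]; exact hr.2
    have hv1 : |v| ≤ |v₀| + 1 := by
      have hd := abs_lt.1 (mem_ball_iff_norm.1 hv)
      have h1 := neg_abs_le v₀
      have h2 := le_abs_self v₀
      exact abs_le.2 ⟨by linarith [hd.1], by linarith [hd.2]⟩
    have hvr : |v*r| ≤ |v₀| + 1 := by
      rw [abs_mul]
      calc |v| * |r| ≤ (|v₀|+1) * 1 := mul_le_mul hv1 hr1 (abs_nonneg r) (by positivity)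
      _ = |v₀| + 1 := by ring
    calc |r^3 * sinh (v*r)| = |r|^3 * |sinh (v*r)| := by rw [abs_mul, abs_pow]
    _ ≤ 1 * cosh (|v₀| + 1) := by
        apply mul_le_mul _ (sinh_abs_le hvr) (abs_nonneg _) zero_le_one
        exact pow_le_one₀ (abs_nonneg r) hr1
    _ = cosh (|v₀| + 1) := one_mul _
  · intro r _ v _
    have h1 : HasDerivAt (fun v : ℝ => v*r) r v := by
      simpa using (hasDerivAt_id v).mul_const r
    have := (h1.cosh).const_mul (r^2)
    refine this.congr_deriv ?_
    ring

lemma phi_continuous : Continuous phi :=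
  continuous_iff_continuousAt.2 fun v => (hasDerivAt_phi v).continuousAt
lemma phi1_continuous : Continuous phi1 :=
  continuous_iff_continuousAt.2 fun v => (hasDerivAt_phi1 v).continuousAt
lemma phi2_continuous : Continuous phi2 :=
  continuous_iff_continuousAt.2 fun v => (hasDerivAt_phi2 v).continuousAt

lemma integrableOn_cosh_vr (v : ℝ) : IntegrableOn (fun r => cosh (v*r)) (Ioc (0:ℝ) 1) :=
  (Real.continuous_cosh.comp (continuous_const.mul continuous_id)).integrableOn_Ioc

lemma one_le_phi (v : ℝ) : 1 ≤ phi v := by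
  have h1 : (∫ r in Ioc (0:ℝ) 1, (1:ℝ)) ≤ phi v :=
    setIntegral_mono_on (integrableOn_const (by simp [Real.volume_Ioc]))
      (integrableOn_cosh_vr v) measurableSet_Ioc (fun r _ => one_le_cosh (v*r))
  calc (1:ℝ) = ∫ r in Ioc (0:ℝ) 1, (1:ℝ) := by simp [Real.volume_Ioc]
  _ ≤ phi v := h1

lemma phi_pos (v : ℝ) : 0 < phi v := lt_of_lt_of_le one_pos (one_le_phi v)

lemma abs_phi1_le (v : ℝ) : |phi1 v| ≤ phi v := by
  have h1 : |phi1 v| ≤ ∫ r in Ioc (0:ℝ) 1, |r| * |sinh (v*r)| := by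
    rw [phi1]
    simpa [Real.norm_eq_abs, abs_mul] using norm_integral_le_integral_norm
      (μ := volume.restrict (Ioc (0:ℝ) 1)) (fun r => r * sinh (v*r))
  have h2 : IntegrableOn (fun r : ℝ => |r| * |sinh (v*r)|) (Ioc (0:ℝ) 1) :=
    Continuous.integrableOn_Ioc (by continuity)
  refine h1.trans (setIntegral_mono_on h2 (integrableOn_cosh_vr v) measurableSet_Ioc ?_)
  · intro r hr
    have hr1 : |r| ≤ 1 := by rw [abs_of_pos hr.1]; exact hr.2
    calc |r| * |sinh (v*r)| ≤ 1 * cosh (v*r) :=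
          mul_le_mul hr1 (abs_sinh_le_cosh _) (abs_nonneg _) zero_le_one
    _ = cosh (v*r) := one_mul _


lemma phi2_nonneg (v : ℝ) : 0 ≤ phi2 v :=
  setIntegral_nonneg measurableSet_Ioc fun r hr =>
    mul_nonneg (sq_nonneg r) (cosh_pos _).le

lemma phi2_le_phi (v : ℝ) : phi2 v ≤ phi v := by
  have h1 : IntegrableOn (fun r : ℝ => r^2 * cosh (v*r)) (Ioc (0:ℝ) 1) :=
    Continuous.integrableOn_Ioc (by continuity)
  apply setIntegral_mono_on h1 (integrableOn_cosh_vr v) measurableSet_Ioc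
  intro r hr
  have hr1 : r^2 ≤ 1 := by
    have := pow_le_one₀ (abs_nonneg r) (by rw [abs_of_pos hr.1]; exact hr.2 : |r| ≤ 1) (n := 2)
    calc r^2 = |r|^2 := (sq_abs r).symm
    _ ≤ 1 := this
  nlinarith [cosh_pos (v*r)]


lemma mul_exp_neg_le_one {w : ℝ} (hw : 0 ≤ w) : w * exp (-w) ≤ 1 := by
  have h1 : w + 1 ≤ exp w := add_one_le_exp w
  have h2 : exp w * exp (-w) = 1 := by rw [← exp_add]; simp
  nlinarith [exp_pos (-w), exp_pos w]

lemma phi_exp_key {t p : ℝ} (ht : 0 < t) (hp : 0 < p) : p * exp (-(t*p/4)) ≤ 4/t := by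
  have h1 := mul_exp_neg_le_one (w := t*p/4) (by positivity)
  rw [le_div_iff₀ ht]
  nlinarith [exp_pos (-(t*p/4))]

lemma mul_exp_div_le {t b : ℝ} (ht : 0 ≤ t) (hb : 0 < b) : t * exp (-(t/b)) ≤ b := by
  have := mul_exp_neg_le_one (w := t/b) (by positivity)
  have h2 : t/b * exp (-(t/b)) * b ≤ 1 * b := by
    apply mul_le_mul_of_nonneg_right this hb.le
  calc t * exp (-(t/b)) = t/b * exp (-(t/b)) * b := by field_simp
  _ ≤ 1 * b := h2
  _ = b := one_mul b

section Bounds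
variable {c σ t : ℝ}

lemma tphi_pos (ht : 0 < t) (σ : ℝ) : 0 < t * phi (σ*t) := mul_pos ht (phi_pos _)
lemma t_le_tphi (ht : 0 < t) (σ : ℝ) : t ≤ t * phi (σ*t) := by
  nlinarith [one_le_phi (σ*t)]

lemma bound0_ptwise (hc : 0 < c) (ht : 0 < t) (σ : ℝ) :
    |J 0 (t * phi (σ*t)) * exp (-(c*t))|
      ≤ Real.sqrt (π/(t/2)) / 2 * exp (-t) * exp (-(c*t)) := by
  have hz := tphi_pos ht σ
  have hzt := t_le_tphi ht σ
  rw [abs_mul, abs_of_nonneg (J_nonneg 0 _), abs_of_nonneg (exp_pos _).le]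
  apply mul_le_mul_of_nonneg_right _ (exp_pos _).le
  calc J 0 (t * phi (σ*t)) ≤ Real.sqrt (π/((t * phi (σ*t))/2)) / 2 * exp (-(t * phi (σ*t))) :=
        J0_le hz
  _ ≤ Real.sqrt (π/(t/2)) / 2 * exp (-t) := by
      apply mul_le_mul
      · have hs : Real.sqrt (π/((t * phi (σ*t))/2)) ≤ Real.sqrt (π/(t/2)) := by
          apply Real.sqrt_le_sqrt
          have h2 : (0:ℝ) < t/2 := by linarith
          have h3 : t/2 ≤ (t * phi (σ*t))/2 := by linarith
          exact div_le_div_of_nonneg_left pi_pos.le h2 h3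
        linarith
      · exact exp_le_exp.2 (by linarith)
      · exact (exp_pos _).le
      · positivity

lemma bound1_ptwise (hc : 0 < c) (ht : 0 < t) (σ : ℝ) :
    |(-(J 1 (t * phi (σ*t)) * (t^2 * phi1 (σ*t)))) * exp (-(c*t))|
      ≤ 2 * t * exp (-(t/2)) * exp (-(c*t)) := by
  have hz := tphi_pos ht σ
  have hzt := t_le_tphi ht σ
  have hφ := phi_pos (σ*t)
  have hφ1 := abs_phi1_le (σ*t)
  rw [abs_mul, abs_neg, abs_mul, abs_of_nonneg (J_nonneg 1 _), abs_of_nonneg (exp_pos _).le]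
  apply mul_le_mul_of_nonneg_right _ (exp_pos _).le
  have h1 : |t^2 * phi1 (σ*t)| ≤ t^2 * phi (σ*t) := by
    rw [abs_mul, abs_of_nonneg (sq_nonneg t)]
    exact mul_le_mul_of_nonneg_left hφ1 (sq_nonneg t)
  calc J 1 (t * phi (σ*t)) * |t^2 * phi1 (σ*t)|
      ≤ (2/(t * phi (σ*t)) * exp (-((t * phi (σ*t))/2))) * (t^2 * phi (σ*t)) := by
        apply mul_le_mul (J1_le hz) h1 (abs_nonneg _)
        positivity
  _ = 2 * t * exp (-((t * phi (σ*t))/2)) := by field_simp; exact mul_inv_cancel₀ (by rw [mul_comm]; exact hφ.ne')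
  _ ≤ 2 * t * exp (-(t/2)) := by
        apply mul_le_mul_of_nonneg_left _ (by positivity)
        exact exp_le_exp.2 (by linarith)

lemma bound2_ptwise (hc : 0 < c) (ht : 0 < t) (σ : ℝ) :
    |(J 2 (t*phi (σ*t)) * (t^2*phi1 (σ*t))^2 - J 1 (t*phi (σ*t)) * (t^3 * phi2 (σ*t)))
        * exp (-(c*t))|
      ≤ 14 * t^2 * exp (-(t/4)) * exp (-(c*t)) := by
  have hz := tphi_pos ht σ
  have hzt := t_le_tphi ht σ
  have hφ := phi_pos (σ*t)
  have hφ1 := abs_phi1_le (σ*t)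
  have hφ2 := phi2_nonneg (σ*t)
  have hφ2' := phi2_le_phi (σ*t)
  set z := t * phi (σ*t) with hzdef
  set p := phi (σ*t) with hpdef
  rw [abs_mul, abs_of_nonneg (exp_pos _).le]
  apply mul_le_mul_of_nonneg_right _ (exp_pos _).le
  have hA : J 2 z * (t^2*phi1 (σ*t))^2 ≤ (2*t^3*p + 4*t^2) * exp (-(z/2)) := by
    have h1 : (t^2*phi1 (σ*t))^2 ≤ (t^2*p)^2 := by
      have : |t^2*phi1 (σ*t)| ≤ t^2*p := by
        rw [abs_mul, abs_of_nonneg (sq_nonneg t)]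
        exact mul_le_mul_of_nonneg_left hφ1 (sq_nonneg t)
      nlinarith [abs_nonneg (t^2*phi1 (σ*t)), sq_abs (t^2*phi1 (σ*t))]
    calc J 2 z * (t^2*phi1 (σ*t))^2 ≤ ((2/z + 4/z^2) * exp (-(z/2))) * (t^2*p)^2 := by
          apply mul_le_mul (J2_le hz) h1 (sq_nonneg _)
          positivity
    _ = (2*t^3*p + 4*t^2) * exp (-(z/2)) := by
        rw [hzdef]
        field_simp
  have hB : J 1 z * (t^3 * phi2 (σ*t)) ≤ 2*t^2 * exp (-(z/2)) := by
    calc J 1 z * (t^3 * phi2 (σ*t)) ≤ (2/z * exp (-(z/2))) * (t^3 * p) := by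
          apply mul_le_mul (J1_le hz) _ (by positivity) (by positivity)
          exact mul_le_mul_of_nonneg_left hφ2' (by positivity)
    _ = 2*t^2 * exp (-(z/2)) := by
        rw [hzdef]; field_simp
  have hAnn : 0 ≤ J 2 z * (t^2*phi1 (σ*t))^2 := mul_nonneg (J_nonneg 2 z) (sq_nonneg _)
  have hBnn : 0 ≤ J 1 z * (t^3 * phi2 (σ*t)) :=
    mul_nonneg (J_nonneg 1 z) (mul_nonneg (by positivity) hφ2)
  have habs : |J 2 z * (t^2*phi1 (σ*t))^2 - J 1 z * (t^3 * phi2 (σ*t))|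
      ≤ (2*t^3*p + 6*t^2) * exp (-(z/2)) := by
    rw [abs_le]
    constructor
    · nlinarith [exp_pos (-(z/2))]
    · nlinarith [exp_pos (-(z/2))]
  refine habs.trans ?_
  have hsplit : exp (-(z/2)) = exp (-(z/4)) * exp (-(z/4)) := by
    rw [← exp_add]; congr 1; ring
  have hkey : p * exp (-(z/4)) ≤ 4/t := by
    rw [hzdef]
    exact phi_exp_key ht hφ
  have hexp4 : exp (-(z/4)) ≤ exp (-(t/4)) := exp_le_exp.2 (by linarith)
  calc (2*t^3*p + 6*t^2) * exp (-(z/2))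
      = 2*t^3*(p * exp (-(z/4))) * exp (-(z/4)) + 6*t^2 * exp (-(z/2)) := by
        rw [hsplit]; ring
  _ ≤ 2*t^3*(4/t) * exp (-(t/4)) + 6*t^2 * exp (-(t/4)) := by
      apply add_le_add
      · exact mul_le_mul (mul_le_mul_of_nonneg_left hkey (by positivity)) hexp4
          (exp_pos _).le (by positivity)
      · apply mul_le_mul_of_nonneg_left _ (by positivity)
        exact exp_le_exp.2 (by linarith)
  _ ≤ 14 * t^2 * exp (-(t/4)) := by
      have : 2*t^3*(4/t) = 8*t^2 := by field_simp; ring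
      rw [this]
      nlinarith [exp_pos (-(t/4))]

end Bounds

section G
variable {c : ℝ}

noncomputable def G0 (c σ : ℝ) : ℝ := ∫ t in Ioi (0:ℝ), J 0 (t * phi (σ*t)) * exp (-(c*t))
noncomputable def G1 (c σ : ℝ) : ℝ :=
  ∫ t in Ioi (0:ℝ), (-(J 1 (t * phi (σ*t)) * (t^2 * phi1 (σ*t)))) * exp (-(c*t))
noncomputable def G2 (c σ : ℝ) : ℝ :=
  ∫ t in Ioi (0:ℝ), (J 2 (t*phi (σ*t)) * (t^2*phi1 (σ*t))^2
    - J 1 (t*phi (σ*t)) * (t^3 * phi2 (σ*t))) * exp (-(c*t))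

lemma cont_inner (σ : ℝ) : Continuous fun t : ℝ => t * phi (σ*t) :=
  continuous_id.mul (phi_continuous.comp (continuous_const.mul continuous_id))

lemma cont_inner' (t : ℝ) : Continuous fun σ : ℝ => t * phi (σ*t) :=
  continuous_const.mul (phi_continuous.comp (continuous_id.mul continuous_const))

lemma maps_inner (σ : ℝ) : MapsTo (fun t : ℝ => t * phi (σ*t)) (Ioi 0) (Ioi 0) :=
  fun t ht => mem_Ioi.2 (tphi_pos (mem_Ioi.1 ht) σ)

lemma contOn_J_inner (n : ℕ) (σ : ℝ) :
    ContinuousOn (fun t : ℝ => J n (t * phi (σ*t))) (Ioi 0) :=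
  (J_continuousOn n).comp (cont_inner σ).continuousOn (maps_inner σ)

lemma aesm0 (c σ : ℝ) :
    AEStronglyMeasurable (fun t : ℝ => J 0 (t * phi (σ*t)) * exp (-(c*t)))
      (volume.restrict (Ioi 0)) :=
  ((contOn_J_inner 0 σ).mul (Continuous.continuousOn (by continuity))).aestronglyMeasurable
    measurableSet_Ioi

lemma cont_tphi1 (σ : ℝ) : Continuous fun t : ℝ => t^2 * phi1 (σ*t) :=
  (continuous_pow 2).mul (phi1_continuous.comp (continuous_const.mul continuous_id))

lemma cont_tphi2 (σ : ℝ) : Continuous fun t : ℝ => t^3 * phi2 (σ*t) :=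
  (continuous_pow 3).mul (phi2_continuous.comp (continuous_const.mul continuous_id))

lemma aesm1 (c σ : ℝ) :
    AEStronglyMeasurable (fun t : ℝ => (-(J 1 (t * phi (σ*t)) * (t^2 * phi1 (σ*t)))) * exp (-(c*t)))
      (volume.restrict (Ioi 0)) :=
  ((((contOn_J_inner 1 σ).mul (cont_tphi1 σ).continuousOn).neg.mul
    (Continuous.continuousOn (by continuity))).aestronglyMeasurable measurableSet_Ioi)

lemma aesm2 (c σ : ℝ) :
    AEStronglyMeasurable (fun t : ℝ => (J 2 (t*phi (σ*t)) * (t^2*phi1 (σ*t))^2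
      - J 1 (t*phi (σ*t)) * (t^3 * phi2 (σ*t))) * exp (-(c*t)))
      (volume.restrict (Ioi 0)) := by
  apply ContinuousOn.aestronglyMeasurable _ measurableSet_Ioi
  apply ContinuousOn.mul _ (Continuous.continuousOn (by continuity))
  apply ContinuousOn.sub
  · exact (contOn_J_inner 2 σ).mul ((cont_tphi1 σ).pow 2).continuousOn
  · exact (contOn_J_inner 1 σ).mul (cont_tphi2 σ).continuousOn

lemma int_bound0 (hc : 0 < c) :
    IntegrableOn (fun t : ℝ => Real.sqrt (π/(t/2)) / 2 * exp (-t) * exp (-(c*t))) (Ioi 0) := by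
  have hg : IntegrableOn (fun t : ℝ => 2 * (exp (-t) * t ^ ((1/2:ℝ) - 1))) (Ioi 0) :=
    (Real.GammaIntegral_convergent one_half_pos).const_mul 2
  refine Integrable.mono' hg ?_ ?_
  · apply ContinuousOn.aestronglyMeasurable _ measurableSet_Ioi
    apply ContinuousOn.mul
    apply ContinuousOn.mul
    · apply ContinuousOn.div_const
      apply Real.continuous_sqrt.comp_continuousOn
      exact continuousOn_const.div (continuous_id.div_const 2).continuousOn
        (fun t ht => by simpa using ne_of_gt (half_pos (mem_Ioi.1 ht)))
    · exact (Continuous.continuousOn (by continuity))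
    · exact (Continuous.continuousOn (by continuity))
  · filter_upwards [ae_restrict_mem measurableSet_Ioi] with t ht
    have ht0 : (0:ℝ) < t := mem_Ioi.1 ht
    have h1 : Real.sqrt (π/(t/2)) ≤ 4 / Real.sqrt t := by
      have e1 : π/(t/2) ≤ 16/t := by
        rw [div_le_div_iff₀ (by positivity) ht0]
        nlinarith [pi_le_four]
      calc Real.sqrt (π/(t/2)) ≤ Real.sqrt (16/t) := Real.sqrt_le_sqrt e1
      _ = Real.sqrt 16 / Real.sqrt t := Real.sqrt_div (by norm_num) t
      _ = 4 / Real.sqrt t := by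
          rw [show (16:ℝ) = 4^2 by norm_num, Real.sqrt_sq (by norm_num : (0:ℝ) ≤ 4)]
    have hsq : 0 < Real.sqrt t := Real.sqrt_pos.2 ht0
    have hrp : t ^ ((1/2:ℝ) - 1) = (Real.sqrt t)⁻¹ := by
      rw [show ((1:ℝ)/2 - 1) = -(1/2) by norm_num, Real.rpow_neg ht0.le, ← Real.sqrt_eq_rpow]
    have hexpc : exp (-(c*t)) ≤ 1 := exp_le_one_iff.2 (by nlinarith)
    rw [Real.norm_eq_abs, abs_of_nonneg (by positivity), hrp]
    calc Real.sqrt (π/(t/2)) / 2 * exp (-t) * exp (-(c*t))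
        ≤ (4 / Real.sqrt t) / 2 * exp (-t) * 1 := by
          apply mul_le_mul _ hexpc (exp_pos _).le (by positivity)
          apply mul_le_mul_of_nonneg_right _ (exp_pos _).le
          linarith
    _ = 2 * (exp (-t) * (Real.sqrt t)⁻¹) := by field_simp; ring

end G

section G2
variable {c : ℝ}

lemma exp_c_le_one {c t : ℝ} (hc : 0 < c) (ht : 0 < t) : exp (-(c*t)) ≤ 1 :=
  exp_le_one_iff.2 (by nlinarith)

lemma int_bound1 (hc : 0 < c) :
    IntegrableOn (fun t : ℝ => 2 * t * exp (-(t/2)) * exp (-(c*t))) (Ioi 0) := by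
  have hg : IntegrableOn (fun t : ℝ => 8 * exp (-(1/4 : ℝ) * t)) (Ioi 0) :=
    (exp_neg_integrableOn_Ioi 0 (by norm_num)).const_mul 8
  refine Integrable.mono' hg (Continuous.aestronglyMeasurable (by continuity)).restrict ?_
  filter_upwards [ae_restrict_mem measurableSet_Ioi] with t ht
  have ht0 : (0:ℝ) < t := mem_Ioi.1 ht
  rw [Real.norm_eq_abs, abs_of_nonneg (by positivity)]
  have h1 : t * exp (-(t/4)) ≤ 4 := mul_exp_div_le ht0.le (by norm_num)
  have hsplit : exp (-(t/2)) = exp (-(t/4)) * exp (-(t/4)) := by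
    rw [← exp_add]; congr 1; ring
  calc 2 * t * exp (-(t/2)) * exp (-(c*t))
      ≤ 2 * t * exp (-(t/2)) * 1 := by
        apply mul_le_mul_of_nonneg_left (exp_c_le_one hc ht0) (by positivity)
  _ = 2 * (t * exp (-(t/4))) * exp (-(t/4)) := by rw [hsplit]; ring
  _ ≤ 2 * 4 * exp (-(t/4)) := by
      apply mul_le_mul_of_nonneg_right _ (exp_pos _).le
      linarith
  _ = 8 * exp (-(1/4 : ℝ) * t) := by rw [show -(1/4 : ℝ)*t = -(t/4) by ring]; norm_num

lemma int_bound2 (hc : 0 < c) :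
    IntegrableOn (fun t : ℝ => 14 * t^2 * exp (-(t/4)) * exp (-(c*t))) (Ioi 0) := by
  have hg : IntegrableOn (fun t : ℝ => 3584 * exp (-(1/8 : ℝ) * t)) (Ioi 0) :=
    (exp_neg_integrableOn_Ioi 0 (by norm_num)).const_mul 3584
  refine Integrable.mono' hg (Continuous.aestronglyMeasurable (by continuity)).restrict ?_
  filter_upwards [ae_restrict_mem measurableSet_Ioi] with t ht
  have ht0 : (0:ℝ) < t := mem_Ioi.1 ht
  rw [Real.norm_eq_abs, abs_of_nonneg (by positivity)]
  have h1 : t * exp (-(t/16)) ≤ 16 := mul_exp_div_le ht0.le (by norm_num)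
  have hsplit : exp (-(t/4)) = exp (-(t/16)) * exp (-(t/16)) * exp (-(t/8)) := by
    rw [← exp_add, ← exp_add]; congr 1; ring
  calc 14 * t^2 * exp (-(t/4)) * exp (-(c*t))
      ≤ 14 * t^2 * exp (-(t/4)) * 1 := by
        apply mul_le_mul_of_nonneg_left (exp_c_le_one hc ht0) (by positivity)
  _ = 14 * ((t * exp (-(t/16))) * (t * exp (-(t/16)))) * exp (-(t/8)) := by
      rw [hsplit]; ring
  _ ≤ 14 * (16 * 16) * exp (-(t/8)) := by
      apply mul_le_mul_of_nonneg_right _ (exp_pos _).le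
      have hnn : 0 ≤ t * exp (-(t/16)) := by positivity
      nlinarith
  _ = 3584 * exp (-(1/8 : ℝ) * t) := by rw [show -(1/8 : ℝ)*t = -(t/8) by ring]; norm_num

lemma integrable0 (hc : 0 < c) (σ : ℝ) :
    IntegrableOn (fun t : ℝ => J 0 (t * phi (σ*t)) * exp (-(c*t))) (Ioi 0) := by
  refine Integrable.mono' (int_bound0 hc) (aesm0 c σ) ?_
  filter_upwards [ae_restrict_mem measurableSet_Ioi] with t ht
  exact bound0_ptwise hc (mem_Ioi.1 ht) σ

lemma integrable1 (hc : 0 < c) (σ : ℝ) :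
    IntegrableOn (fun t : ℝ => (-(J 1 (t * phi (σ*t)) * (t^2 * phi1 (σ*t)))) * exp (-(c*t)))
      (Ioi 0) := by
  refine Integrable.mono' (int_bound1 hc) (aesm1 c σ) ?_
  filter_upwards [ae_restrict_mem measurableSet_Ioi] with t ht
  exact bound1_ptwise hc (mem_Ioi.1 ht) σ

lemma integrable2 (hc : 0 < c) (σ : ℝ) :
    IntegrableOn (fun t : ℝ => (J 2 (t*phi (σ*t)) * (t^2*phi1 (σ*t))^2
      - J 1 (t*phi (σ*t)) * (t^3 * phi2 (σ*t))) * exp (-(c*t))) (Ioi 0) := by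
  refine Integrable.mono' (int_bound2 hc) (aesm2 c σ) ?_
  filter_upwards [ae_restrict_mem measurableSet_Ioi] with t ht
  exact bound2_ptwise hc (mem_Ioi.1 ht) σ

lemma hasDerivAt_inner {t : ℝ} (σ : ℝ) :
    HasDerivAt (fun σ : ℝ => t * phi (σ*t)) (t^2 * phi1 (σ*t)) σ := by
  have h1 : HasDerivAt (fun σ : ℝ => σ*t) t σ := by
    simpa using (hasDerivAt_id σ).mul_const t
  have h2 : HasDerivAt (fun σ : ℝ => phi (σ*t)) (phi1 (σ*t) * t) σ :=
    (hasDerivAt_phi (σ*t)).comp (h := fun σ => σ*t) σ h1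
  have h3 := h2.const_mul t
  refine h3.congr_deriv ?_
  ring

lemma hasDerivAt_integrand0 {t : ℝ} (ht : 0 < t) (c σ : ℝ) :
    HasDerivAt (fun σ : ℝ => J 0 (t * phi (σ*t)) * exp (-(c*t)))
      ((-(J 1 (t * phi (σ*t)) * (t^2 * phi1 (σ*t)))) * exp (-(c*t))) σ := by
  have h1 : HasDerivAt (fun σ : ℝ => J 0 (t * phi (σ*t)))
      (-(J 1 (t * phi (σ*t))) * (t^2 * phi1 (σ*t))) σ :=
    (hasDerivAt_J 0 (tphi_pos ht σ)).comp (h := fun σ => t * phi (σ*t)) σ (hasDerivAt_inner σ)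
  have h2 := h1.mul_const (exp (-(c*t)))
  refine h2.congr_deriv ?_
  ring

lemma hasDerivAt_integrand1 {t : ℝ} (ht : 0 < t) (c σ : ℝ) :
    HasDerivAt (fun σ : ℝ => (-(J 1 (t * phi (σ*t)) * (t^2 * phi1 (σ*t)))) * exp (-(c*t)))
      ((J 2 (t*phi (σ*t)) * (t^2*phi1 (σ*t))^2
        - J 1 (t*phi (σ*t)) * (t^3 * phi2 (σ*t))) * exp (-(c*t))) σ := by
  have hJ : HasDerivAt (fun σ : ℝ => J 1 (t * phi (σ*t)))
      (-(J 2 (t * phi (σ*t))) * (t^2 * phi1 (σ*t))) σ :=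
    (hasDerivAt_J 1 (tphi_pos ht σ)).comp (h := fun σ => t * phi (σ*t)) σ (hasDerivAt_inner σ)
  have hP : HasDerivAt (fun σ : ℝ => t^2 * phi1 (σ*t)) (t^3 * phi2 (σ*t)) σ := by
    have h1 : HasDerivAt (fun σ : ℝ => σ*t) t σ := by
      simpa using (hasDerivAt_id σ).mul_const t
    have h2 : HasDerivAt (fun σ : ℝ => phi1 (σ*t)) (phi2 (σ*t) * t) σ :=
      (hasDerivAt_phi1 (σ*t)).comp (h := fun σ => σ*t) σ h1
    have h3 := h2.const_mul (t^2)
    refine h3.congr_deriv ?_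
    ring
  have h4 := ((hJ.mul hP).neg).mul_const (exp (-(c*t)))
  refine h4.congr_deriv ?_
  ring

lemma hasDerivAt_G0 (hc : 0 < c) (σ₀ : ℝ) : HasDerivAt (G0 c) (G1 c σ₀) σ₀ := by
  have key := hasDerivAt_integral_of_dominated_loc_of_deriv_le
    (F := fun σ t => J 0 (t * phi (σ*t)) * exp (-(c*t)))
    (F' := fun σ t => (-(J 1 (t * phi (σ*t)) * (t^2 * phi1 (σ*t)))) * exp (-(c*t)))
    (x₀ := σ₀) (s := ball σ₀ 1)
    (bound := fun t => 2 * t * exp (-(t/2)) * exp (-(c*t)))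
    (μ := volume.restrict (Ioi (0:ℝ))) (ball_mem_nhds _ one_pos)
    (Eventually.of_forall fun σ => aesm0 c σ)
    (integrable0 hc σ₀) (aesm1 c σ₀) ?_ (int_bound1 hc) ?_
  · exact key.2
  · filter_upwards [ae_restrict_mem measurableSet_Ioi] with t ht σ _
    exact bound1_ptwise hc (mem_Ioi.1 ht) σ
  · filter_upwards [ae_restrict_mem measurableSet_Ioi] with t ht σ _
    exact hasDerivAt_integrand0 (mem_Ioi.1 ht) c σ

lemma hasDerivAt_G1 (hc : 0 < c) (σ₀ : ℝ) : HasDerivAt (G1 c) (G2 c σ₀) σ₀ := by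
  have key := hasDerivAt_integral_of_dominated_loc_of_deriv_le
    (F := fun σ t => (-(J 1 (t * phi (σ*t)) * (t^2 * phi1 (σ*t)))) * exp (-(c*t)))
    (F' := fun σ t => (J 2 (t*phi (σ*t)) * (t^2*phi1 (σ*t))^2
      - J 1 (t*phi (σ*t)) * (t^3 * phi2 (σ*t))) * exp (-(c*t)))
    (x₀ := σ₀) (s := ball σ₀ 1)
    (bound := fun t => 14 * t^2 * exp (-(t/4)) * exp (-(c*t)))
    (μ := volume.restrict (Ioi (0:ℝ))) (ball_mem_nhds _ one_pos)
    (Eventually.of_forall fun σ => aesm1 c σ)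
    (integrable1 hc σ₀) (aesm2 c σ₀) ?_ (int_bound2 hc) ?_
  · exact key.2
  · filter_upwards [ae_restrict_mem measurableSet_Ioi] with t ht σ _
    exact bound2_ptwise hc (mem_Ioi.1 ht) σ
  · filter_upwards [ae_restrict_mem measurableSet_Ioi] with t ht σ _
    exact hasDerivAt_integrand1 (mem_Ioi.1 ht) c σ

lemma continuous_G2 (hc : 0 < c) : Continuous (G2 c) := by
  apply continuous_of_dominated (bound := fun t => 14 * t^2 * exp (-(t/4)) * exp (-(c*t)))
    (fun σ => aesm2 c σ) ?_ (int_bound2 hc) ?_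
  · intro σ
    filter_upwards [ae_restrict_mem measurableSet_Ioi] with t ht
    exact bound2_ptwise hc (mem_Ioi.1 ht) σ
  · filter_upwards [ae_restrict_mem measurableSet_Ioi] with t ht
    have ht0 : (0:ℝ) < t := mem_Ioi.1 ht
    have hc1 : Continuous fun σ : ℝ => J 2 (t * phi (σ*t)) :=
      (J_continuousOn 2).comp_continuous (cont_inner' t)
        (fun σ => mem_Ioi.2 (tphi_pos ht0 σ))
    have hc2 : Continuous fun σ : ℝ => J 1 (t * phi (σ*t)) :=
      (J_continuousOn 1).comp_continuous (cont_inner' t)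
        (fun σ => mem_Ioi.2 (tphi_pos ht0 σ))
    apply Continuous.mul _ continuous_const
    apply Continuous.sub
    · exact hc1.mul ((continuous_const.mul
        (phi1_continuous.comp (continuous_id.mul continuous_const))).pow 2)
    · exact hc2.mul (continuous_const.mul
        (phi2_continuous.comp (continuous_id.mul continuous_const)))

lemma contDiff_G0 (hc : 0 < c) : ContDiff ℝ 2 (G0 c) := by
  have hd0 : deriv (G0 c) = G1 c := funext fun σ => (hasDerivAt_G0 hc σ).deriv
  have hd1 : deriv (G1 c) = G2 c := funext fun σ => (hasDerivAt_G1 hc σ).deriv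
  rw [show (2 : WithTop ℕ∞) = 1 + 1 from by norm_num, contDiff_succ_iff_deriv]
  refine ⟨fun σ => (hasDerivAt_G0 hc σ).differentiableAt, by simp, ?_⟩
  rw [hd0, contDiff_one_iff_deriv]
  exact ⟨fun σ => (hasDerivAt_G1 hc σ).differentiableAt, by rw [hd1]; exact continuous_G2 hc⟩


end G2

lemma besselK_eq_J0 (z : ℝ) : besselK 0 z = J 0 z := by
  unfold besselK J
  apply setIntegral_congr_fun measurableSet_Ioi
  intro u _
  simp [neg_mul]

lemma besselK_eq_J1 (z : ℝ) : besselK 1 z = J 1 z := by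
  unfold besselK J
  apply setIntegral_congr_fun measurableSet_Ioi
  intro u _
  simp [neg_mul, mul_comm]

lemma G1_zero (c : ℝ) : G1 c 0 = 0 := by
  unfold G1
  have : (fun t : ℝ => (-(J 1 (t * phi (0*t)) * (t^2 * phi1 (0*t)))) * exp (-(c*t)))
      = fun _ => (0:ℝ) := by
    funext t
    rw [zero_mul, phi1_zero]
    ring
  rw [this]
  simp

lemma G2_zero (c : ℝ) :
    G2 c 0 = -(1/3) * ∫ t in Ioi (0:ℝ), t^3 * J 1 t * exp (-(c*t)) := by
  unfold G2
  have : (fun t : ℝ => (J 2 (t*phi (0*t)) * (t^2*phi1 (0*t))^2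
      - J 1 (t*phi (0*t)) * (t^3 * phi2 (0*t))) * exp (-(c*t)))
      = fun t => (-(1/3)) * (t^3 * J 1 t * exp (-(c*t))) := by
    funext t
    rw [zero_mul, phi_zero, phi1_zero, phi2_zero, mul_one]
    ring
  rw [this, integral_const_mul]


end BK

open BK

theorem stmt_5 (x y : ℝ) (hx : 0 < x) (hy : 0 < y) (hxy : x / y < 1)
    (F : ℝ → ℝ)
    (hF0 : F 0 = ∫ t in Set.Ioi (0:ℝ), besselK 0 t * Real.exp (-(x/y) * t))
    (hFs : ∀ s : ℝ, s ≠ 0 →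
      F s = 2 * y * ∫ t in Set.Ioi (0:ℝ),
        besselK 0 (2 * y * t * (Real.sinh (s*t) / (s*t))) * Real.exp (-2*x*t)) :
    ContDiff ℝ 2 F ∧ deriv F 0 = 0 ∧
      deriv (deriv F) 0
        = -(1/(12*y^2)) * ∫ t in Set.Ioi (0:ℝ), t^3 * besselK 1 t * Real.exp (-(x/y)*t) := by
  set c := x/y with hcdef
  have hc : 0 < c := div_pos hx hy
  have hy2 : (0:ℝ) < 2*y := by linarith
  have hy2' : (2*y) ≠ 0 := ne_of_gt hy2
  -- F s = G0 c (s / (2*y)) for all s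
  have hFfun : F = fun s => G0 c ((2*y)⁻¹ * s) := by
    funext s
    rcases eq_or_ne s 0 with rfl | hs
    · rw [hF0]
      have : (2*y)⁻¹ * (0:ℝ) = 0 := by ring
      rw [this]
      unfold G0
      apply setIntegral_congr_fun measurableSet_Ioi
      intro t _
      dsimp only
      rw [zero_mul, phi_zero, mul_one, besselK_eq_J0, neg_mul]
    · rw [hFs s hs]
      have key : ∀ t ∈ Ioi (0:ℝ),
          besselK 0 (2 * y * t * (Real.sinh (s*t) / (s*t))) * Real.exp (-2*x*t)
            = J 0 ((2*y*t) * phi (((2*y)⁻¹ * s) * (2*y*t))) * exp (-(c*(2*y*t))) := by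
        intro t ht
        have ht0 : (0:ℝ) < t := mem_Ioi.1 ht
        have hst : s*t ≠ 0 := mul_ne_zero hs (ne_of_gt ht0)
        have e1 : ((2*y)⁻¹ * s) * (2*y*t) = s*t := by field_simp
        have e2 : phi (s*t) = Real.sinh (s*t) / (s*t) := phi_eq hst
        have e3 : 2 * y * t * (Real.sinh (s*t) / (s*t)) = (2*y*t) * phi (((2*y)⁻¹ * s) * (2*y*t)) := by
          rw [e1, e2]
        have e4 : Real.exp (-2*x*t) = exp (-(c*(2*y*t))) := by
          congr 1
          rw [hcdef]
          field_simp
        rw [e3, e4, besselK_eq_J0]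
      rw [setIntegral_congr_fun measurableSet_Ioi key]
      have hcomp := integral_comp_mul_left_Ioi
        (fun τ => J 0 (τ * phi (((2*y)⁻¹ * s) * τ)) * exp (-(c*τ))) 0 hy2
      rw [mul_zero] at hcomp
      rw [hcomp]
      unfold G0
      rw [smul_eq_mul]
      field_simp
      congr 1; ext t; ring_nf
  have hL : ∀ s : ℝ, HasDerivAt (fun s : ℝ => (2*y)⁻¹ * s) ((2*y)⁻¹) s := by
    intro s
    simpa using (hasDerivAt_id s).const_mul ((2*y)⁻¹)
  have hFderiv : ∀ s : ℝ, HasDerivAt F (G1 c ((2*y)⁻¹ * s) * (2*y)⁻¹) s := by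
    intro s
    rw [hFfun]
    exact (hasDerivAt_G0 hc ((2*y)⁻¹ * s)).comp s (hL s)
  have hderivF : deriv F = fun s => G1 c ((2*y)⁻¹ * s) * (2*y)⁻¹ :=
    funext fun s => (hFderiv s).deriv
  refine ⟨?_, ?_, ?_⟩
  · rw [hFfun]
    exact (contDiff_G0 hc).comp (contDiff_const.mul contDiff_id)
  · rw [hderivF]
    simp [G1_zero]
  · have hFd2 : HasDerivAt (deriv F) (G2 c ((2*y)⁻¹ * 0) * (2*y)⁻¹ * (2*y)⁻¹) 0 := by
      rw [hderivF]
      exact ((hasDerivAt_G1 hc ((2*y)⁻¹ * 0)).comp 0 (hL 0)).mul_const ((2*y)⁻¹)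
    rw [hFd2.deriv]
    have h0 : (2*y)⁻¹ * (0:ℝ) = 0 := by ring
    rw [h0, G2_zero]
    have hIeq : (∫ t in Ioi (0:ℝ), t^3 * J 1 t * exp (-(c*t)))
        = ∫ t in Set.Ioi (0:ℝ), t^3 * besselK 1 t * Real.exp (-c*t) := by
      apply setIntegral_congr_fun measurableSet_Ioi
      intro t _
      dsimp only
      rw [besselK_eq_J1, neg_mul]
    rw [hIeq]
    generalize (∫ t in Set.Ioi (0:ℝ), t^3 * besselK 1 t * Real.exp (-c*t)) = I
    have hs : ((1:ℝ)/3) * (2*y)⁻¹ * (2*y)⁻¹ = 1/(12*y^2) := by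
      field_simp
      ring
    calc -(1/3) * I * (2*y)⁻¹ * (2*y)⁻¹ = -((1/3) * (2*y)⁻¹ * (2*y)⁻¹ * I) := by ring
    _ = -(1/(12*y^2) * I) := by rw [hs]
    _ = -(1/(12*y^2)) * I := by rw [neg_mul]
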